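/- Assume λ = 1, and assume additionally that ψ is strictly increasing (if M_2 - M_1 is positive semidefinite, M_1, M_2 positive definite and M_1 ≠ M_2, then ψ(M_1) < ψ(M_2)) and strictly concave (for positive definite M_1 ≠ M_2, ψ(M_2) < ψ(M_1) + tr(D(M_1)(M_2 - M_1))). Let w be a probability vector with all coordinates positive such that M(w) is positive definite, D(M(w)^{-1}) A_i ≠ 0 for all i, and M(Tw) is positive definite, where (Tw)_i = w_i d_i(w) / Σ_j w_j d_j(w) and d_i(w) = tr(M(w)^{-1} D(M(w)^{-1}) M(w)^{-1} A_i). If Tw ≠ w, then ψ(M(Tw)^{-1}) < ψ(M(w)^{-1}) strictly. (Strict monotonicity of the algorithm for λ = 1 under strictly increasing, strictly concave ψ.) -/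

import Mathlib

open Matrix

section SqrtPort

open scoped MatrixOrder

variable {m : ℕ}

noncomputable def Matrix.PosSemidef.sqrt {A : Matrix (Fin m) (Fin m) ℝ} (_hA : A.PosSemidef) :
    Matrix (Fin m) (Fin m) ℝ := CFC.sqrt A

lemma Matrix.PosSemidef.posSemidef_sqrt {A : Matrix (Fin m) (Fin m) ℝ} (hA : A.PosSemidef) :
    hA.sqrt.PosSemidef := Matrix.nonneg_iff_posSemidef.mp (CFC.sqrt_nonneg A)

lemma Matrix.PosSemidef.sqrt_mul_self {A : Matrix (Fin m) (Fin m) ℝ} (hA : A.PosSemidef) :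
    hA.sqrt * hA.sqrt = A := CFC.sqrt_mul_sqrt_self A hA.nonneg

end SqrtPort

section StmtAux

variable {m : ℕ}

lemma aux_symm {S : Matrix (Fin m) (Fin m) ℝ} (hs : S.IsHermitian) : Sᵀ = S := by
  rw [← Matrix.conjTranspose_eq_transpose_of_trivial]; exact hs

lemma aux_quad_nonneg {A : Matrix (Fin m) (Fin m) ℝ} (hA : A.PosSemidef) (x : Fin m → ℝ) :
    0 ≤ x ⬝ᵥ A *ᵥ x := by simpa using hA.dotProduct_mulVec_nonneg x

lemma aux_dot_symm {A : Matrix (Fin m) (Fin m) ℝ} (hA : A.IsHermitian) (x y : Fin m → ℝ) :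
    x ⬝ᵥ A *ᵥ y = y ⬝ᵥ A *ᵥ x := by
  conv_lhs => rw [dotProduct_mulVec, ← Matrix.mulVec_transpose, dotProduct_comm, aux_symm hA]

lemma aux_psd_mulVec_zero {A : Matrix (Fin m) (Fin m) ℝ} (hA : A.PosSemidef) {x : Fin m → ℝ}
    (h : x ⬝ᵥ A *ᵥ x = 0) : A *ᵥ x = 0 := by
  have hs := hA.posSemidef_sqrt
  have key : (hA.sqrt *ᵥ x) ⬝ᵥ (hA.sqrt *ᵥ x) = 0 := by
    rw [← h]
    conv_rhs => rw [← hA.sqrt_mul_self, ← mulVec_mulVec]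
    rw [aux_dot_symm hs.1 (hA.sqrt *ᵥ x) x]
  have h0 : hA.sqrt *ᵥ x = 0 := by
    rwa [dotProduct_self_eq_zero] at key
  calc A *ᵥ x = hA.sqrt *ᵥ (hA.sqrt *ᵥ x) := by rw [mulVec_mulVec, hA.sqrt_mul_self]
  _ = 0 := by rw [h0, mulVec_zero]

lemma aux_trace_sum {C : Matrix (Fin m) (Fin m) ℝ} (hC : C.PosSemidef)
    (X : Matrix (Fin m) (Fin m) ℝ) :
    (C * X).trace = ∑ k, (fun j => hC.sqrt k j) ⬝ᵥ X *ᵥ (fun j => hC.sqrt k j) := by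
  have h1 : C * X = hC.sqrt * (hC.sqrt * X) := by
    rw [← Matrix.mul_assoc, hC.sqrt_mul_self]
  rw [h1, Matrix.trace_mul_comm]
  have hsym : ∀ a b, hC.sqrt a b = hC.sqrt b a := by
    intro a b
    conv_lhs => rw [← aux_symm hC.posSemidef_sqrt.1]
    exact Matrix.transpose_apply _ a b
  simp only [Matrix.trace, Matrix.diag, Matrix.mul_apply, dotProduct, Matrix.mulVec,
    Finset.mul_sum, Finset.sum_mul]
  refine Finset.sum_congr rfl fun k _ => ?_
  rw [Finset.sum_comm]
  refine Finset.sum_congr rfl fun a _ => Finset.sum_congr rfl fun b _ => ?_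
  rw [hsym b k]
  ring

lemma aux_mulVec_sum {n : ℕ} (A : Fin n → Matrix (Fin m) (Fin m) ℝ) (c : Fin n → ℝ)
    (y : Fin m → ℝ) : (∑ i, c i • A i) *ᵥ y = ∑ i, c i • (A i *ᵥ y) := by
  funext a
  simp only [Matrix.mulVec, dotProduct, Matrix.sum_apply, Matrix.smul_apply, smul_eq_mul,
    Finset.sum_apply, Pi.smul_apply, Finset.sum_mul, Finset.mul_sum]
  rw [Finset.sum_comm]
  exact Finset.sum_congr rfl fun i _ => Finset.sum_congr rfl fun b _ => by ring

lemma aux_dot_sum {n : ℕ} (A : Fin n → Matrix (Fin m) (Fin m) ℝ) (c : Fin n → ℝ)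
    (x y : Fin m → ℝ) : x ⬝ᵥ (∑ i, c i • A i) *ᵥ y = ∑ i, c i * (x ⬝ᵥ A i *ᵥ y) := by
  rw [aux_mulVec_sum]
  simp only [dotProduct, Finset.sum_apply, Pi.smul_apply, smul_eq_mul, Finset.mul_sum]
  rw [Finset.sum_comm]
  exact Finset.sum_congr rfl fun i _ => Finset.sum_congr rfl fun b _ => by ring

end StmtAux

/-- Strict monotonicity of the multiplicative algorithm for `lam = 1`, under a
strictly increasing and strictly concave `ψ`: if `Tw ≠ w` then
`ψ(M(Tw)⁻¹) < ψ(M(w)⁻¹)` strictly. -/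
theorem stmt_18 {n m : ℕ} (hn : 0 < n) (hm : 0 < m)
    (A : Fin n → Matrix (Fin m) (Fin m) ℝ) (hA : ∀ i, (A i).PosSemidef)
    (ψ : Matrix (Fin m) (Fin m) ℝ → ℝ)
    (D : Matrix (Fin m) (Fin m) ℝ → Matrix (Fin m) (Fin m) ℝ)
    (hDpsd : ∀ M : Matrix (Fin m) (Fin m) ℝ, M.PosDef → (D M).PosSemidef)
    (hconc : ∀ M₁ M₂ : Matrix (Fin m) (Fin m) ℝ, M₁.PosDef → M₂.PosDef →
      ψ M₂ ≤ ψ M₁ + (D M₁ * (M₂ - M₁)).trace)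
    -- ψ is strictly increasing
    (hsinc : ∀ M₁ M₂ : Matrix (Fin m) (Fin m) ℝ, M₁.PosDef → M₂.PosDef →
      (M₂ - M₁).PosSemidef → M₁ ≠ M₂ → ψ M₁ < ψ M₂)
    -- ψ is strictly concave
    (hsconc : ∀ M₁ M₂ : Matrix (Fin m) (Fin m) ℝ, M₁.PosDef → M₂.PosDef →
      M₁ ≠ M₂ → ψ M₂ < ψ M₁ + (D M₁ * (M₂ - M₁)).trace)
    (M : (Fin n → ℝ) → Matrix (Fin m) (Fin m) ℝ)
    (hM : ∀ v : Fin n → ℝ, M v = ∑ i, v i • A i)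
    (w : Fin n → ℝ) (hw : ∀ i, 0 < w i) (hw1 : ∑ i, w i = 1)
    (d : Fin n → ℝ)
    (hd : ∀ i, d i = ((M w)⁻¹ * D ((M w)⁻¹) * (M w)⁻¹ * A i).trace)
    (Tw : Fin n → ℝ)
    (hTw : ∀ i, Tw i = w i * d i / ∑ j, w j * d j)
    (hMwpos : (M w).PosDef)
    (hDA : ∀ i, D ((M w)⁻¹) * A i ≠ 0)
    (hMTwpos : (M Tw).PosDef)
    (hne : Tw ≠ w) :
    ψ ((M Tw)⁻¹) < ψ ((M w)⁻¹) := by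
  classical
  have hNdet : IsUnit (M w).det := isUnit_iff_ne_zero.mpr hMwpos.det_pos.ne'
  have hQdet : IsUnit (M Tw).det := isUnit_iff_ne_zero.mpr hMTwpos.det_pos.ne'
  have hNinv_pd : ((M w)⁻¹).PosDef := hMwpos.inv
  have hQinv_pd : ((M Tw)⁻¹).PosDef := hMTwpos.inv
  set B := D (M w)⁻¹ with hBdef
  have hBpsd : B.PosSemidef := hDpsd _ hNinv_pd
  set C := (M w)⁻¹ * B * (M w)⁻¹ with hCdef
  have hCpsd : C.PosSemidef := by
    have h := hBpsd.mul_mul_conjTranspose_same (M w)⁻¹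
    rwa [hNinv_pd.1.eq] at h
  have hd' : ∀ i, d i = (C * A i).trace := hd
  have hNCN : M w * C * M w = B := by
    rw [hCdef]
    simp only [Matrix.mul_assoc]
    rw [Matrix.nonsing_inv_mul _ hNdet, Matrix.mul_one, ← Matrix.mul_assoc,
      Matrix.mul_nonsing_inv _ hNdet, Matrix.one_mul]
  have htr : ∀ v : Fin n → ℝ, (C * M v).trace = ∑ i, v i * d i := by
    intro v
    rw [hM v, Matrix.mul_sum, Matrix.trace_sum]
    refine Finset.sum_congr rfl fun i _ => ?_
    rw [Matrix.mul_smul, Matrix.trace_smul, smul_eq_mul, ← hd' i]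
  have hCN : C * M w = (M w)⁻¹ * B := by
    rw [hCdef, Matrix.mul_assoc ((M w)⁻¹ * B), Matrix.nonsing_inv_mul _ hNdet, Matrix.mul_one]
  set s := ∑ j, w j * d j with hsdef
  have hsum_d : s = (B * (M w)⁻¹).trace := by
    rw [hsdef, ← htr w, hCN, Matrix.trace_mul_comm]
  have hdnn : ∀ i, 0 ≤ d i := by
    intro i
    rw [hd' i, aux_trace_sum hCpsd]
    exact Finset.sum_nonneg fun k _ => aux_quad_nonneg (hA i) _
  -- positivity of s
  have hspos : 0 < s := by
    rcases lt_or_eq_of_le (Finset.sum_nonneg fun i _ => mul_nonneg (hw i).le (hdnn i)) with h | h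
    · exact h
    · exfalso
      have hdz : ∀ i, d i = 0 := by
        intro i
        have := (Finset.sum_eq_zero_iff_of_nonneg
          (fun i _ => mul_nonneg (hw i).le (hdnn i))).mp h.symm i (Finset.mem_univ i)
        exact (mul_eq_zero.mp this).resolve_left (hw i).ne'
      have h0 : (C * M w).trace = 0 := by
        rw [htr w]
        exact Finset.sum_eq_zero fun i _ => by rw [hdz i, mul_zero]
      rw [aux_trace_sum hCpsd] at h0
      have hveczero : ∀ k, (fun j => hCpsd.sqrt k j) = (0 : Fin m → ℝ) := by
        intro k
        by_contra hk
        have hpos := hMwpos.dotProduct_mulVec_pos hk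
        simp only [star_trivial] at hpos
        have hq0 : (fun j => hCpsd.sqrt k j) ⬝ᵥ M w *ᵥ (fun j => hCpsd.sqrt k j) = 0 :=
          (Finset.sum_eq_zero_iff_of_nonneg
            (fun k _ => aux_quad_nonneg hMwpos.posSemidef _)).mp h0 k (Finset.mem_univ k)
        exact absurd hq0 hpos.ne'
      have hsqrt0 : hCpsd.sqrt = 0 := by
        ext k j
        exact congrFun (hveczero k) j
      have hC0 : C = 0 := by
        rw [← hCpsd.sqrt_mul_self, hsqrt0, Matrix.mul_zero]
      have hB0 : B = 0 := by
        rw [← hNCN, hC0, Matrix.mul_zero, Matrix.zero_mul]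
      exact hDA ⟨0, hn⟩ (by rw [hB0, Matrix.zero_mul])
  -- vanishing directions for zero d i
  have hx0 : ∀ i, d i = 0 → ∀ k, A i *ᵥ (fun j => hCpsd.sqrt k j) = 0 := by
    intro i hdi k
    have h0 : ∑ k, (fun j => hCpsd.sqrt k j) ⬝ᵥ A i *ᵥ (fun j => hCpsd.sqrt k j) = 0 := by
      rw [← aux_trace_sum hCpsd (A i), ← hd' i, hdi]
    have hq0 := (Finset.sum_eq_zero_iff_of_nonneg
      (fun k _ => aux_quad_nonneg (hA i) _)).mp h0 k (Finset.mem_univ k)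
    exact aux_psd_mulVec_zero (hA i) hq0
  set e : Fin n → ℝ := fun i => if d i = 0 then 0 else s * w i / d i with hedef
  -- key pointwise inequality
  have hkey : ∀ x : Fin m → ℝ, (∀ i, d i = 0 → A i *ᵥ x = 0) →
      x ⬝ᵥ (M w * (M Tw)⁻¹ * M w) *ᵥ x ≤ ∑ i, e i * (x ⬝ᵥ A i *ᵥ x) := by
    intro x hx
    set y := (M Tw)⁻¹ *ᵥ (M w *ᵥ x) with hy
    have hmv : (M w * (M Tw)⁻¹ * M w) *ᵥ x = M w *ᵥ y := by
      rw [hy, Matrix.mulVec_mulVec, Matrix.mulVec_mulVec, Matrix.mul_assoc]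
    have hQy : M Tw *ᵥ y = M w *ᵥ x := by
      rw [hy, Matrix.mulVec_mulVec, Matrix.mul_nonsing_inv _ hQdet, Matrix.one_mulVec]
    have hxNy : x ⬝ᵥ (M w * (M Tw)⁻¹ * M w) *ᵥ x
        = 2 * (x ⬝ᵥ M w *ᵥ y) - y ⬝ᵥ M Tw *ᵥ y := by
      rw [hmv, hQy, aux_dot_symm hMwpos.1 y x]
      ring
    have hNx : x ⬝ᵥ M w *ᵥ y = ∑ i, w i * (x ⬝ᵥ A i *ᵥ y) := by
      rw [hM w]; exact aux_dot_sum A w x y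
    have hQe : y ⬝ᵥ M Tw *ᵥ y = ∑ i, Tw i * (y ⬝ᵥ A i *ᵥ y) := by
      rw [hM Tw]; exact aux_dot_sum A Tw y y
    rw [hxNy, hNx, hQe, Finset.mul_sum, ← Finset.sum_sub_distrib]
    refine Finset.sum_le_sum fun i _ => ?_
    by_cases hdi : d i = 0
    · have hAx := hx i hdi
      have h1 : x ⬝ᵥ A i *ᵥ y = 0 := by
        rw [aux_dot_symm (hA i).1 x y, hAx, dotProduct_zero]
      have hTwi : Tw i = 0 := by rw [hTw i, hdi, mul_zero, zero_div]
      simp [hedef, hdi, h1, hTwi]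
    · have hdp : 0 < d i := lt_of_le_of_ne (hdnn i) (Ne.symm hdi)
      have hq := aux_quad_nonneg (hA i) (s • x - d i • y)
      have hexp : (s • x - d i • y) ⬝ᵥ A i *ᵥ (s • x - d i • y)
          = s^2*(x ⬝ᵥ A i *ᵥ x) - 2*s*d i*(x ⬝ᵥ A i *ᵥ y) + d i^2*(y ⬝ᵥ A i *ᵥ y) := by
        rw [Matrix.mulVec_sub, Matrix.mulVec_smul, Matrix.mulVec_smul,
          sub_dotProduct, smul_dotProduct, smul_dotProduct, dotProduct_sub, dotProduct_sub,
          dotProduct_smul, dotProduct_smul, dotProduct_smul, dotProduct_smul,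
          aux_dot_symm (hA i).1 y x]
        simp only [smul_eq_mul]
        ring
      rw [hexp] at hq
      have hTwi : Tw i = w i * d i / s := hTw i
      have hei : e i = s * w i / d i := by rw [hedef]; simp [hdi]
      rw [hTwi, hei]
      have expand : s * w i / d i * (x ⬝ᵥ A i *ᵥ x)
          - (2 * (w i * (x ⬝ᵥ A i *ᵥ y)) - w i * d i / s * (y ⬝ᵥ A i *ᵥ y))
          = w i / (s * d i) * (s^2*(x ⬝ᵥ A i *ᵥ x) - 2*s*d i*(x ⬝ᵥ A i *ᵥ y)
            + d i^2*(y ⬝ᵥ A i *ᵥ y)) := by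
        field_simp
        ring
      have hnn : 0 ≤ w i / (s * d i) * (s^2*(x ⬝ᵥ A i *ᵥ x) - 2*s*d i*(x ⬝ᵥ A i *ᵥ y)
          + d i^2*(y ⬝ᵥ A i *ᵥ y)) :=
        mul_nonneg (div_nonneg (hw i).le (mul_nonneg hspos.le hdp.le)) hq
      linarith [expand ▸ hnn]
  -- the key trace inequality
  have e1 : (B * (M Tw)⁻¹).trace = (C * (M w * (M Tw)⁻¹ * M w)).trace := by
    conv_lhs => rw [← hNCN]
    rw [Matrix.mul_assoc (M w * C) (M w) ((M Tw)⁻¹), Matrix.mul_assoc (M w) C (M w * (M Tw)⁻¹),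
      Matrix.trace_mul_comm, Matrix.mul_assoc C (M w * (M Tw)⁻¹) (M w)]
  have key2 : (B * (M Tw)⁻¹).trace ≤ s := by
    rw [e1, aux_trace_sum hCpsd]
    calc ∑ k, (fun j => hCpsd.sqrt k j) ⬝ᵥ (M w * (M Tw)⁻¹ * M w) *ᵥ (fun j => hCpsd.sqrt k j)
        ≤ ∑ k, ∑ i, e i * ((fun j => hCpsd.sqrt k j) ⬝ᵥ A i *ᵥ (fun j => hCpsd.sqrt k j)) :=
          Finset.sum_le_sum fun k _ => hkey _ (fun i hdi => hx0 i hdi k)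
      _ = ∑ i, e i * ∑ k, ((fun j => hCpsd.sqrt k j) ⬝ᵥ A i *ᵥ (fun j => hCpsd.sqrt k j)) := by
          rw [Finset.sum_comm]
          exact Finset.sum_congr rfl fun i _ => by rw [Finset.mul_sum]
      _ = ∑ i, e i * d i := by
          refine Finset.sum_congr rfl fun i _ => ?_
          rw [← aux_trace_sum hCpsd (A i), ← hd' i]
      _ ≤ ∑ i, s * w i := by
          refine Finset.sum_le_sum fun i _ => ?_
          by_cases hdi : d i = 0
          · rw [hdi, mul_zero]
            exact mul_nonneg hspos.le (hw i).le
          · rw [hedef]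
            simp only [if_neg hdi]
            rw [div_mul_cancel₀ _ hdi]
      _ = s := by rw [← Finset.mul_sum, hw1, mul_one]
  -- M Tw ≠ M w
  have hQN : M Tw ≠ M w := by
    intro hEq
    have h1 : ∑ i, Tw i * d i = s := by rw [← htr Tw, hEq, htr w]
    have h2 : ∑ i, w i * d i * d i = s * s := by
      have h3 : ∑ i, Tw i * d i = (∑ i, w i * d i * d i) / s := by
        rw [Finset.sum_div]
        refine Finset.sum_congr rfl fun i _ => ?_
        rw [hTw i]
        ring
      rw [h3] at h1
      field_simp at h1
      linarith [h1, sq s, show ∑ i, w i * d i * d i = ∑ x, w x * d x ^ 2 from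
        Finset.sum_congr rfl fun i _ => by ring]
    have h3 : ∑ i, w i * (d i - s)^2 = 0 := by
      have expand : ∀ i ∈ Finset.univ, w i * (d i - s)^2
          = w i * d i * d i - 2 * s * (w i * d i) + s^2 * w i := fun i _ => by ring
      rw [Finset.sum_congr rfl expand, Finset.sum_add_distrib, Finset.sum_sub_distrib,
        ← Finset.mul_sum, ← Finset.mul_sum, ← hsdef, h2, hw1]
      ring
    have h4 : ∀ i, d i = s := by
      intro i
      have h5 := (Finset.sum_eq_zero_iff_of_nonneg
        (fun i _ => mul_nonneg (hw i).le (sq_nonneg _))).mp h3 i (Finset.mem_univ i)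
      have h6 : (d i - s)^2 = 0 := (mul_eq_zero.mp h5).resolve_left (hw i).ne'
      have := pow_eq_zero_iff (n := 2) (by norm_num) |>.mp h6
      linarith [this]
    apply hne
    funext i
    rw [hTw i, h4 i, mul_div_assoc, div_self hspos.ne', mul_one]
  have hInvNe : (M w)⁻¹ ≠ (M Tw)⁻¹ := by
    intro h
    apply hQN
    rw [← Matrix.nonsing_inv_nonsing_inv (M Tw) hQdet, ← h,
      Matrix.nonsing_inv_nonsing_inv (M w) hNdet]
  have hfin := hsconc (M w)⁻¹ (M Tw)⁻¹ hNinv_pd hQinv_pd hInvNe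
  have htr2 : (B * ((M Tw)⁻¹ - (M w)⁻¹)).trace
      = (B * (M Tw)⁻¹).trace - (B * (M w)⁻¹).trace := by
    rw [Matrix.mul_sub, Matrix.trace_sub]
  rw [htr2] at hfin
  linarith [key2, hsum_d.le, hfin]
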